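/- The equivalence relation u ∼ v ⟺ WC(u) = WC(v) on packed words is compatible with convolution: if u ∼ u' are packed words of length m and v ∼ v' are packed words of length n, then the multisets {WC(w) : w ∈ u ∗ v} and {WC(w) : w ∈ u' ∗ v'} coincide. -/

import Mathlib

/-- Descent set of a composition `I` (list of parts): partial sums except the total. -/
def descSetC (I : List ℕ) : Finset ℕ :=
  ((I.scanl (· + ·) 0).tail.dropLast).toFinset

/-- `I` is a composition of `n`: positive parts summing to `n`. -/
def IsComp (n : ℕ) (I : List ℕ) : Prop :=
  (∀ i ∈ I, 0 < i) ∧ I.sum = n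

/-- The composition of `n` whose descent set is `D ⊆ {1,…,n-1}`. -/
def compOfDescSet (n : ℕ) (D : Finset ℕ) : List ℕ :=
  let s := (D.sort (· ≤ ·)) ++ [n]
  (List.zipWith (fun a b => a - b) s (0 :: s)).filter (fun x => 0 < x)
/-- All words of length `n` over the alphabet `{1,…,n}`. -/
def allWords (n : ℕ) : List (List ℕ) :=
  (List.range n).foldr
    (fun _ acc => (List.range' 1 n).flatMap (fun a => acc.map (a :: ·))) [[]]

def maxL (u : List ℕ) : ℕ := u.foldr max 0

/-- A word is packed if its set of letters is `{1,…,k}` for some `k`. -/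
def IsPacked (u : List ℕ) : Prop := u.toFinset = Finset.Icc 1 (maxL u)

instance : DecidablePred IsPacked := fun u => by unfold IsPacked; infer_instance

/-- Descent set of the W-composition: positions (1-indexed, excluding the last)
of last occurrences of each letter. -/
def WCdesc (u : List ℕ) : Finset ℕ :=
  (((Finset.range u.length).filter
    (fun j => u.getD j 0 ∉ u.drop (j+1))).image (· + 1)).erase u.length

/-- The W-composition of a packed word. -/
def WComp (u : List ℕ) : List ℕ := compOfDescSet u.length (WCdesc u)
/-- The packing of a word: replace letters by `1, 2, …` preserving order. -/
def pack (w : List ℕ) : List ℕ :=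
  w.map (fun x => (w.toFinset.sort (· ≤ ·)).idxOf x + 1)

/-- The convolution `u ∗ v` of two packed words: the packed words `w` whose
first `|u|` letters pack to `u` and remaining letters pack to `v`. -/
def conv (u v : List ℕ) : List (List ℕ) :=
  (allWords (u.length + v.length)).filter
    (fun w => decide (IsPacked w ∧ pack (w.take u.length) = u ∧ pack (w.drop u.length) = v))

def wordsAux (n k : ℕ) : List (List ℕ) :=
  (List.range k).foldr
    (fun _ acc => (List.range' 1 n).flatMap (fun a => acc.map (a :: ·))) [[]]

lemma allWords_eq (n : ℕ) : allWords n = wordsAux n n := rfl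

lemma wordsAux_succ (n k : ℕ) :
    wordsAux n (k+1) = (List.range' 1 n).flatMap (fun a => (wordsAux n k).map (a :: ·)) := by
  simp [wordsAux, List.range_succ_eq_map, List.foldr_map]

lemma mem_wordsAux {n k : ℕ} {w : List ℕ} :
    w ∈ wordsAux n k ↔ w.length = k ∧ ∀ x ∈ w, 1 ≤ x ∧ x ≤ n := by
  induction k generalizing w with
  | zero =>
    simp only [wordsAux, List.range_zero, List.foldr_nil, List.mem_singleton,
      List.length_eq_zero_iff]
    constructor
    · rintro rfl; simp
    · rintro ⟨rfl, -⟩; rfl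
  | succ k ih =>
    rw [wordsAux_succ]
    simp only [List.mem_flatMap, List.mem_map, List.mem_range'_1]
    constructor
    · rintro ⟨a, ha, t, ht, rfl⟩
      obtain ⟨hl, hx⟩ := ih.1 ht
      refine ⟨by simp [hl], ?_⟩
      intro x hx'
      rcases List.mem_cons.1 hx' with rfl | h
      · omega
      · exact hx x h
    · rintro ⟨hl, hx⟩
      cases w with
      | nil => simp at hl
      | cons a t =>
        have ha := hx a (by simp)
        refine ⟨a, by omega, t, ih.2 ⟨by simpa using hl, fun x hx' => hx x (by simp [hx'])⟩, rfl⟩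

lemma nodup_wordsAux (n k : ℕ) : (wordsAux n k).Nodup := by
  induction k with
  | zero => simp [wordsAux]
  | succ k ih =>
    rw [wordsAux_succ, List.nodup_flatMap]
    refine ⟨fun a _ => ih.map (fun x y h => by injection h), ?_⟩
    exact (List.nodup_range' (s := 1) (n := n)).imp (fun hab => by
      intro x hx1 hx2
      simp only [List.mem_map] at hx1 hx2
      obtain ⟨t1, -, rfl⟩ := hx1
      obtain ⟨t2, -, h⟩ := hx2
      exact hab (by injection h.symm))

lemma mem_allWords {n : ℕ} {w : List ℕ} :
    w ∈ allWords n ↔ w.length = n ∧ ∀ x ∈ w, 1 ≤ x ∧ x ≤ n := mem_wordsAux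

lemma nodup_allWords (n : ℕ) : (allWords n).Nodup := nodup_wordsAux n n

lemma diffs_filter (s : List ℕ) (b : ℕ) (h : List.Chain (· < ·) b s) :
    ((List.zipWith (fun a c => a - c) s (b :: s)).filter (fun x => 0 < x))
      = List.zipWith (fun a c => a - c) s (b :: s) := by
  induction s generalizing b with
  | nil => rfl
  | cons a s ih =>
    obtain ⟨hba, hc⟩ := List.isChain_cons_cons.1 h
    simp only [List.zipWith_cons_cons, List.filter_cons, decide_eq_true_eq]
    rw [if_pos (by omega), ih a hc]

lemma scanl_diffs (s : List ℕ) (b : ℕ) (h : List.Chain (· < ·) b s) :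
    List.scanl (· + ·) b (List.zipWith (fun a c => a - c) s (b :: s)) = b :: s := by
  induction s generalizing b with
  | nil => rfl
  | cons a s ih =>
    obtain ⟨hba, hc⟩ := List.isChain_cons_cons.1 h
    simp only [List.zipWith_cons_cons, List.scanl_cons]
    rw [show b + (a - b) = a by omega, ih a hc]

lemma descSetC_compOfDescSet {n : ℕ} {D : Finset ℕ} (hD : D ⊆ Finset.Icc 1 (n-1)) :
    descSetC (compOfDescSet n D) = D := by
  rcases Nat.eq_zero_or_pos n with rfl | hn
  · have hDe : D = ∅ := Finset.subset_empty.1 (by simpa using hD)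
    subst hDe
    simp [descSetC, compOfDescSet, Finset.sort_empty]
  · have hchain : List.Chain (· < ·) 0 ((D.sort (· ≤ ·)) ++ [n]) := by
      show List.IsChain _ (0 :: _)
      rw [List.isChain_iff_pairwise]
      have hs := List.sortedLT_iff_pairwise.1 (Finset.sortedLT_sort D)
      rw [show (0 :: ((D.sort (· ≤ ·)) ++ [n])) = (0 :: D.sort (· ≤ ·)) ++ [n] by simp]
      rw [List.pairwise_append]
      refine ⟨?_, by simp, ?_⟩
      · rw [List.pairwise_cons]
        refine ⟨fun b hb => ?_, hs⟩
        have := hD (by rwa [← Finset.mem_sort (· ≤ ·)])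
        simp only [Finset.mem_Icc] at this
        omega
      · intro x hx y hy
        simp only [List.mem_singleton] at hy
        subst hy
        rcases List.mem_cons.1 hx with rfl | hx
        · omega
        · have := hD (by rwa [← Finset.mem_sort (· ≤ ·)])
          simp only [Finset.mem_Icc] at this
          omega
    unfold descSetC compOfDescSet
    rw [diffs_filter _ _ hchain, scanl_diffs _ _ hchain]
    simp [Finset.sort_toFinset]

def letterF (F : List ℕ) (a : ℕ) : ℕ := F.getD (a-1) 0

lemma List.toFinset_map' (l : List ℕ) (f : ℕ → ℕ) :
    (l.map f).toFinset = l.toFinset.image f := by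
  induction l with
  | nil => simp
  | cons a l ih => simp [ih]

lemma le_maxL {a : ℕ} {x : List ℕ} (h : a ∈ x) : a ≤ maxL x := by
  induction x with
  | nil => simp at h
  | cons b x ih =>
    rcases List.mem_cons.1 h with rfl | h
    · exact le_max_left _ _
    · exact le_trans (ih h) (le_max_right _ _)

lemma maxL_le {x : List ℕ} {p : ℕ} (h : ∀ a ∈ x, a ≤ p) : maxL x ≤ p := by
  induction x with
  | nil => exact Nat.zero_le p
  | cons b x ih =>
    exact max_le (h b (by simp)) (ih (fun a ha => h a (by simp [ha])))

lemma maxL_of_toFinset {x : List ℕ} {p : ℕ} (h : x.toFinset = Finset.Icc 1 p) :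
    maxL x = p := by
  rcases Nat.eq_zero_or_pos p with rfl | hp
  · have : x = [] := by
      rw [← List.toFinset_eq_empty_iff, h]
      simp
    simp [this, maxL]
  · apply le_antisymm
    · apply maxL_le
      intro a ha
      have : a ∈ x.toFinset := List.mem_toFinset.2 ha
      rw [h, Finset.mem_Icc] at this
      omega
    · apply le_maxL
      rw [← List.mem_toFinset, h, Finset.mem_Icc]
      omega

lemma isPacked_of_toFinset {x : List ℕ} {p : ℕ} (h : x.toFinset = Finset.Icc 1 p) :
    IsPacked x ∧ maxL x = p := by
  have := maxL_of_toFinset h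
  exact ⟨by rw [IsPacked, this, h], this⟩

/-- C1 -/
lemma toFinset_relabel {u : List ℕ} {k : ℕ} (hu : u.toFinset = Finset.Icc 1 k)
    {s : Finset ℕ} (hcard : s.card = k) :
    (u.map (letterF (s.sort (· ≤ ·)))).toFinset = s := by
  set F := s.sort (· ≤ ·) with hF
  have hlen : F.length = k := by rw [hF, Finset.length_sort, hcard]
  rw [List.toFinset_map', hu]
  ext x
  simp only [Finset.mem_image, Finset.mem_Icc]
  constructor
  · rintro ⟨a, ha, rfl⟩
    have hlt : a - 1 < F.length := by omega
    rw [letterF, List.getD_eq_getElem _ _ hlt]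
    rw [← Finset.mem_sort (α := ℕ) (· ≤ ·) (s := s), ← hF]
    exact List.getElem_mem hlt
  · intro hx
    have hx' : x ∈ F := by rw [hF, Finset.mem_sort]; exact hx
    obtain ⟨i, hi, rfl⟩ := List.mem_iff_getElem.1 hx'
    refine ⟨i + 1, by omega, ?_⟩
    rw [letterF, Nat.add_sub_cancel, List.getD_eq_getElem _ _ hi]

/-- injectivity of letterF on Icc 1 k -/
lemma letterF_injOn {k : ℕ} {s : Finset ℕ} (hcard : s.card = k) {a b : ℕ}
    (ha : a ∈ Finset.Icc 1 k) (hb : b ∈ Finset.Icc 1 k)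
    (h : letterF (s.sort (· ≤ ·)) a = letterF (s.sort (· ≤ ·)) b) : a = b := by
  set F := s.sort (· ≤ ·) with hF
  have hlen : F.length = k := by rw [hF, Finset.length_sort, hcard]
  simp only [Finset.mem_Icc] at ha hb
  have h1 : a - 1 < F.length := by omega
  have h2 : b - 1 < F.length := by omega
  rw [letterF, letterF, List.getD_eq_getElem _ _ h1, List.getD_eq_getElem _ _ h2] at h
  have := ((show F.Nodup from Finset.sort_nodup s (· ≤ ·)).getElem_inj_iff).1 h
  omega

/-- C2 -/
lemma pack_relabel {u : List ℕ} {k : ℕ} (hu : u.toFinset = Finset.Icc 1 k)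
    {s : Finset ℕ} (hcard : s.card = k) :
    pack (u.map (letterF (s.sort (· ≤ ·)))) = u := by
  set F := s.sort (· ≤ ·) with hF
  have hlen : F.length = k := by rw [hF, Finset.length_sort, hcard]
  have htf : (u.map (letterF F)).toFinset = s := toFinset_relabel hu hcard
  rw [pack, htf, ← hF, List.map_map]
  have : ∀ a ∈ u, (fun x => F.idxOf x + 1) (letterF F a) = a := by
    intro a ha
    have ha' : a ∈ Finset.Icc 1 k := by rw [← hu]; exact List.mem_toFinset.2 ha
    simp only [Finset.mem_Icc] at ha'
    have hlt : a - 1 < F.length := by omega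
    simp only [letterF, List.getD_eq_getElem _ _ hlt]
    rw [List.Nodup.idxOf_getElem (Finset.sort_nodup s (· ≤ ·)) _ hlt]
    omega
  calc u.map ((fun x => F.idxOf x + 1) ∘ letterF F) = u.map id := List.map_congr_left this
  _ = u := List.map_id u

/-- C3 -/
lemma eq_relabel_of_pack {x u : List ℕ} (h : pack x = u) :
    x = u.map (letterF (x.toFinset.sort (· ≤ ·))) := by
  subst h
  rw [pack, List.map_map]
  have : ∀ y ∈ x, (letterF (x.toFinset.sort (· ≤ ·)) ∘ fun z => (x.toFinset.sort (· ≤ ·)).idxOf z + 1) y = y := by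
    intro y hy
    have hy' : y ∈ x.toFinset.sort (· ≤ ·) := by
      rw [Finset.mem_sort]; exact List.mem_toFinset.2 hy
    have hlt := List.idxOf_lt_length_iff.2 hy'
    simp only [Function.comp, letterF, Nat.add_sub_cancel]
    rw [List.getD_eq_getElem _ _ hlt]
    exact List.getElem_idxOf hlt
  exact ((List.map_congr_left this).trans (List.map_id x)).symm

/-- cardinality preserved by pack -/
lemma card_toFinset_pack (x : List ℕ) : (pack x).toFinset.card = x.toFinset.card := by
  rw [pack, List.toFinset_map']
  apply Finset.card_image_of_injOn
  intro a ha b hb h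
  simp only [Nat.add_right_cancel_iff] at h
  have ha' : a ∈ x.toFinset.sort (· ≤ ·) := by rw [Finset.mem_sort]; exact ha
  have hb' : b ∈ x.toFinset.sort (· ≤ ·) := by rw [Finset.mem_sort]; exact hb
  have hA := List.getElem_idxOf (xs := x.toFinset.sort (· ≤ ·)) (List.idxOf_lt_length_iff.2 ha')
  have hB := List.getElem_idxOf (xs := x.toFinset.sort (· ≤ ·)) (List.idxOf_lt_length_iff.2 hb')
  simp only [h] at hA
  rw [← hA, hB]

def lastPosSet (u : List ℕ) : Finset ℕ :=
  (Finset.Icc 1 u.length).filter (fun j => u.getD (j-1) 0 ∉ u.drop j)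

def letterAt (u : List ℕ) (j : ℕ) : ℕ := u.getD (j-1) 0

noncomputable def lastP (u : List ℕ) (a : ℕ) : ℕ :=
  if h : (((Finset.range u.length).filter (fun i => u.getD i 0 = a))).Nonempty then
    (((Finset.range u.length).filter (fun i => u.getD i 0 = a)).max' h) + 1
  else 0

lemma mem_lastPosSet {u : List ℕ} {j : ℕ} :
    j ∈ lastPosSet u ↔ 1 ≤ j ∧ j ≤ u.length ∧ u.getD (j-1) 0 ∉ u.drop j := by
  simp [lastPosSet, Finset.mem_filter, Finset.mem_Icc, and_assoc]

/-- D1 -/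
lemma mem_WCdesc {u : List ℕ} {j : ℕ} :
    j ∈ WCdesc u ↔ 1 ≤ j ∧ j < u.length ∧ u.getD (j-1) 0 ∉ u.drop j := by
  simp only [WCdesc, Finset.mem_erase, Finset.mem_image, Finset.mem_filter, Finset.mem_range]
  constructor
  · rintro ⟨hne, j0, ⟨hj0, hnotin⟩, rfl⟩
    refine ⟨by omega, by omega, by simpa using hnotin⟩
  · rintro ⟨h1, h2, h3⟩
    exact ⟨by omega, j - 1, ⟨by omega, by
      simpa [Nat.sub_add_cancel h1] using h3⟩, by omega⟩

lemma WCdesc_eq_erase (u : List ℕ) : WCdesc u = (lastPosSet u).erase u.length := by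
  ext j
  rw [mem_WCdesc, Finset.mem_erase, mem_lastPosSet]
  constructor
  · rintro ⟨h1, h2, h3⟩; exact ⟨by omega, h1, by omega, h3⟩
  · rintro ⟨hne, h1, h2, h3⟩; exact ⟨h1, by omega, h3⟩

/-- D2 -/
lemma lastPosSet_eq_insert {u : List ℕ} (h : u ≠ []) :
    lastPosSet u = insert u.length (WCdesc u) := by
  have hlen : 1 ≤ u.length := by
    cases u with
    | nil => exact absurd rfl h
    | cons a t => simp
  have hmem : u.length ∈ lastPosSet u := by
    rw [mem_lastPosSet]
    exact ⟨hlen, le_refl _, by simp⟩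
  rw [WCdesc_eq_erase, Finset.insert_erase hmem]

lemma lastPosSet_congr {u u' : List ℕ} (hl : u.length = u'.length)
    (hd : WCdesc u = WCdesc u') : lastPosSet u = lastPosSet u' := by
  rcases eq_or_ne u [] with rfl | hne
  · have : u' = [] := by
      cases u' with
      | nil => rfl
      | cons a t => simp at hl
    subst this; rfl
  · have hne' : u' ≠ [] := by
      cases u' with
      | nil => cases u with | nil => exact absurd rfl hne | cons a t => simp at hl
      | cons a t => simp
    rw [lastPosSet_eq_insert hne, lastPosSet_eq_insert hne', hl, hd]

/-- D3 -/
lemma lastP_spec {u : List ℕ} {a : ℕ} (h : a ∈ u) :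
    lastP u a ∈ lastPosSet u ∧ letterAt u (lastP u a) = a := by
  obtain ⟨i0, hi0, rfl⟩ := List.mem_iff_getElem.1 h
  set s := ((Finset.range u.length).filter (fun i => u.getD i 0 = u[i0])) with hs
  have hne : s.Nonempty := ⟨i0, by
    simp only [hs, Finset.mem_filter, Finset.mem_range]
    exact ⟨hi0, List.getD_eq_getElem _ _ hi0⟩⟩
  have hval : lastP u u[i0] = s.max' hne + 1 := by rw [lastP, dif_pos hne]
  set i := s.max' hne with hi
  have himem : i ∈ s := Finset.max'_mem s hne
  simp only [hs, Finset.mem_filter, Finset.mem_range] at himem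
  obtain ⟨hilt, hival⟩ := himem
  have hletter : letterAt u (lastP u u[i0]) = u[i0] := by
    rw [hval, letterAt, Nat.add_sub_cancel, hival]
  refine ⟨?_, hletter⟩
  rw [mem_lastPosSet, hval, Nat.add_sub_cancel, hival]
  refine ⟨by omega, by omega, ?_⟩
  intro hmem
  obtain ⟨idx, hidx, heq⟩ := List.mem_iff_getElem.1 hmem
  rw [List.getElem_drop] at heq
  have : i + 1 + idx ∈ s := by
    simp only [hs, Finset.mem_filter, Finset.mem_range]
    have hlt : i + 1 + idx < u.length := by
      have := hidx; rw [List.length_drop] at this; omega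
    exact ⟨hlt, by rw [List.getD_eq_getElem _ _ hlt]; exact heq⟩
  have := Finset.le_max' s _ this
  omega

/-- D4 -/
lemma lastP_letterAt {u : List ℕ} {j : ℕ} (h : j ∈ lastPosSet u) :
    letterAt u j ∈ u ∧ lastP u (letterAt u j) = j := by
  rw [mem_lastPosSet] at h
  obtain ⟨h1, h2, h3⟩ := h
  have hlt : j - 1 < u.length := by omega
  have hmem : letterAt u j ∈ u := by
    rw [letterAt, List.getD_eq_getElem _ _ hlt]
    exact List.getElem_mem hlt
  refine ⟨hmem, ?_⟩
  set s := ((Finset.range u.length).filter (fun i => u.getD i 0 = letterAt u j)) with hs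
  have hjs : j - 1 ∈ s := by
    simp only [hs, Finset.mem_filter, Finset.mem_range]
    exact ⟨hlt, rfl⟩
  have hne : s.Nonempty := ⟨_, hjs⟩
  rw [lastP, dif_pos hne]
  have hle : s.max' hne ≤ j - 1 := by
    apply Finset.max'_le
    intro i hi
    simp only [hs, Finset.mem_filter, Finset.mem_range] at hi
    obtain ⟨hilt, hival⟩ := hi
    by_contra hgt
    push_neg at hgt
    apply h3
    have hin : i - j < (u.drop j).length := by rw [List.length_drop]; omega
    refine List.mem_iff_getElem.2 ⟨i - j, hin, ?_⟩
    rw [List.getElem_drop]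
    have hji : j + (i - j) = i := by omega
    simp only [hji]
    rw [List.getD_eq_getElem _ _ hilt] at hival
    rw [hival, letterAt, List.getD_eq_getElem _ _ hlt]
  have hge := Finset.le_max' s _ hjs
  simp only [← hs]
  omega

/-- D7 -/
lemma image_lastP {u : List ℕ} : u.toFinset.image (lastP u) = lastPosSet u := by
  ext j
  simp only [Finset.mem_image, List.mem_toFinset]
  constructor
  · rintro ⟨a, ha, rfl⟩
    exact (lastP_spec ha).1
  · intro hj
    exact ⟨letterAt u j, (lastP_letterAt hj).1, (lastP_letterAt hj).2⟩

lemma WCdesc_merge {u v : List ℕ} {k l : ℕ} (hu : u.toFinset = Finset.Icc 1 k)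
    (hv : v.toFinset = Finset.Icc 1 l)
    {su sv : Finset ℕ} (hsu : su.card = k) (hsv : sv.card = l) (j : ℕ) :
    j ∈ WCdesc (u.map (letterF (su.sort (· ≤ ·))) ++ v.map (letterF (sv.sort (· ≤ ·)))) ↔
      ((j ∈ lastPosSet u ∧ j < u.length + v.length ∧
          letterF (su.sort (· ≤ ·)) (letterAt u j) ∉ sv)
        ∨ (u.length < j ∧ j < u.length + v.length ∧ (j - u.length) ∈ lastPosSet v)) := by
  set f := letterF (su.sort (· ≤ ·)) with hf
  set g := letterF (sv.sort (· ≤ ·)) with hg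
  set A := u.map f with hA
  set B := v.map g with hB
  have hAl : A.length = u.length := by rw [hA, List.length_map]
  have hBl : B.length = v.length := by rw [hB, List.length_map]
  have hlen : (A ++ B).length = u.length + v.length := by
    rw [List.length_append, hAl, hBl]
  rw [mem_WCdesc, hlen]
  by_cases hj : 1 ≤ j ∧ j < u.length + v.length
  · obtain ⟨hj1, hj2⟩ := hj
    by_cases hjm : j ≤ u.length
    · -- prefix case
      have hlt : j - 1 < A.length := by omega
      have hltu : j - 1 < u.length := by omega
      have hgetD : (A ++ B).getD (j-1) 0 = f (letterAt u j) := by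
        rw [List.getD_append _ _ _ _ hlt, hA, List.getD_eq_getElem _ _ hlt,
          List.getElem_map]
        congr 1
        rw [letterAt, List.getD_eq_getElem _ _ hltu]
      have hdrop : (A ++ B).drop j = (u.drop j).map f ++ B := by
        rw [List.drop_append_of_le_length (by omega), hA, List.map_drop]
      rw [hgetD, hdrop]
      have hmemu : letterAt u j ∈ u := by
        rw [letterAt, List.getD_eq_getElem _ _ hltu]
        exact List.getElem_mem hltu
      have hIcc : letterAt u j ∈ Finset.Icc 1 k := by
        rw [← hu]; exact List.mem_toFinset.2 hmemu
      have hfmem : f (letterAt u j) ∈ (u.drop j).map f ↔ letterAt u j ∈ u.drop j := by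
        simp only [List.mem_map]
        constructor
        · rintro ⟨b, hb, hfb⟩
          have hbIcc : b ∈ Finset.Icc 1 k := by
            rw [← hu]
            exact List.mem_toFinset.2 (List.mem_of_mem_drop hb)
          rwa [letterF_injOn hsu hbIcc hIcc hfb] at hb
        · intro hb; exact ⟨_, hb, rfl⟩
      have hfB : f (letterAt u j) ∈ B ↔ f (letterAt u j) ∈ sv := by
        rw [← List.mem_toFinset, hB, toFinset_relabel hv hsv]
      constructor
      · rintro ⟨-, -, hnot⟩
        left
        rw [List.mem_append, hfmem, hfB] at hnot
        push_neg at hnot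
        refine ⟨mem_lastPosSet.2 ⟨hj1, hjm, ?_⟩, hj2, hnot.2⟩
        rw [letterAt] at hnot
        exact hnot.1
      · rintro (⟨hlp, -, hnot⟩ | ⟨hgt, -, -⟩)
        · refine ⟨hj1, hj2, ?_⟩
          rw [List.mem_append, hfmem, hfB]
          push_neg
          rw [mem_lastPosSet] at hlp
          exact ⟨by rw [letterAt]; exact hlp.2.2, hnot⟩
        · omega
    · -- suffix case
      push_neg at hjm
      have hlt : j - 1 - u.length < v.length := by omega
      have hgetD : (A ++ B).getD (j-1) 0 = g (letterAt v (j - u.length)) := by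
        rw [List.getD_append_right _ _ _ _ (by omega), hAl, hB,
          List.getD_eq_getElem _ _ (by rw [List.length_map]; omega), List.getElem_map]
        congr 1
        rw [letterAt, List.getD_eq_getElem _ _ (by omega)]
        congr 1
        omega
      have hdrop : (A ++ B).drop j = (v.drop (j - u.length)).map g := by
        have hda := List.drop_length_add_append (l₁ := A) (l₂ := B) (j - u.length)
        rw [hAl, show u.length + (j - u.length) = j by omega] at hda
        rw [hda, hB, List.map_drop]
      rw [hgetD, hdrop]
      have hltv : j - u.length - 1 < v.length := by omega
      have hmemv : letterAt v (j - u.length) ∈ v := by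
        rw [letterAt, List.getD_eq_getElem _ _ hltv]
        exact List.getElem_mem hltv
      have hIcc : letterAt v (j - u.length) ∈ Finset.Icc 1 l := by
        rw [← hv]; exact List.mem_toFinset.2 hmemv
      have hgmem : g (letterAt v (j - u.length)) ∈ (v.drop (j - u.length)).map g ↔
          letterAt v (j - u.length) ∈ v.drop (j - u.length) := by
        simp only [List.mem_map]
        constructor
        · rintro ⟨b, hb, hgb⟩
          have hbIcc : b ∈ Finset.Icc 1 l := by
            rw [← hv]
            exact List.mem_toFinset.2 (List.mem_of_mem_drop hb)
          rwa [letterF_injOn hsv hbIcc hIcc hgb] at hb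
        · intro hb; exact ⟨_, hb, rfl⟩
      constructor
      · rintro ⟨-, -, hnot⟩
        right
        rw [hgmem] at hnot
        refine ⟨hjm, hj2, mem_lastPosSet.2 ⟨by omega, by omega, ?_⟩⟩
        rw [letterAt] at hnot
        exact hnot
      · rintro (⟨hlp, -, -⟩ | ⟨-, -, hlp⟩)
        · rw [mem_lastPosSet] at hlp; omega
        · refine ⟨hj1, hj2, ?_⟩
          rw [hgmem]
          rw [mem_lastPosSet] at hlp
          rw [letterAt]
          exact hlp.2.2
  · push_neg at hj
    constructor
    · rintro ⟨h1, h2, -⟩; omega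
    · rintro (⟨hlp, h2, -⟩ | ⟨h1, h2, -⟩)
      · rw [mem_lastPosSet] at hlp; omega
      · omega

/-- rewrite the first disjunct via image of lastP -/
lemma disj1_iff {u : List ℕ} {k : ℕ} (hu : u.toFinset = Finset.Icc 1 k)
    (f : ℕ → ℕ) (sv : Finset ℕ) (j : ℕ) :
    (j ∈ lastPosSet u ∧ f (letterAt u j) ∉ sv) ↔
      j ∈ ((Finset.Icc 1 k).filter (fun a => f a ∉ sv)).image (lastP u) := by
  constructor
  · rintro ⟨hlp, hnot⟩
    rw [Finset.mem_image]
    refine ⟨letterAt u j, ?_, (lastP_letterAt hlp).2⟩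
    rw [Finset.mem_filter, ← hu]
    exact ⟨List.mem_toFinset.2 (lastP_letterAt hlp).1, hnot⟩
  · intro hj
    rw [Finset.mem_image] at hj
    obtain ⟨a, ha, rfl⟩ := hj
    rw [Finset.mem_filter, ← hu, List.mem_toFinset] at ha
    obtain ⟨hau, hnot⟩ := ha
    refine ⟨(lastP_spec hau).1, ?_⟩
    rw [(lastP_spec hau).2]
    exact hnot

noncomputable def phi (u u' v' w : List ℕ) : List ℕ :=
  u'.map (letterF ((w.take u.length).toFinset.sort (· ≤ ·))) ++
  v'.map (letterF (((Finset.Icc 1 (maxL w)) \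
    (((((Finset.Icc 1 (maxL u)).filter
        (fun a => letterF ((w.take u.length).toFinset.sort (· ≤ ·)) a ∉ (w.drop u.length).toFinset)).image
        (lastP u)).image (letterAt u')).image
        (letterF ((w.take u.length).toFinset.sort (· ≤ ·))))).sort (· ≤ ·)))

lemma mem_conv {u v w : List ℕ} :
    w ∈ conv u v ↔ w ∈ allWords (u.length + v.length) ∧ IsPacked w ∧
      pack (w.take u.length) = u ∧ pack (w.drop u.length) = v := by
  rw [conv, List.mem_filter]
  constructor
  · rintro ⟨h1, h2⟩; exact ⟨h1, of_decide_eq_true h2⟩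
  · rintro ⟨h1, h2⟩; exact ⟨h1, decide_eq_true h2⟩

theorem phi_main (u u' v v' : List ℕ)
    (hu : IsPacked u) (hu' : IsPacked u') (hv : IsPacked v) (hv' : IsPacked v')
    (hlu : u.length = u'.length) (hlv : v.length = v'.length)
    (hk : maxL u = maxL u') (hl : maxL v = maxL v')
    (hpu : lastPosSet u = lastPosSet u') (hpv : lastPosSet v = lastPosSet v')
    (w : List ℕ) (hw : w ∈ conv u v) :
    phi u u' v' w ∈ conv u' v' ∧ WComp (phi u u' v' w) = WComp w ∧
      phi u' u v (phi u u' v' w) = w := by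
  obtain ⟨hwall, hwpacked, hpackA, hpackB⟩ := mem_conv.1 hw
  obtain ⟨hwlen, hwletters⟩ := mem_allWords.1 hwall
  set m := u.length with hm
  set n := v.length with hn
  set k := maxL u with hkk
  set l := maxL v with hll
  set p := maxL w with hpp
  have huk : u.toFinset = Finset.Icc 1 k := hu
  have hvl : v.toFinset = Finset.Icc 1 l := hv
  have hu'k : u'.toFinset = Finset.Icc 1 k := by rw [hu', ← hk]
  have hv'l : v'.toFinset = Finset.Icc 1 l := by rw [hv', ← hl]
  have hwt : w.toFinset = Finset.Icc 1 p := hwpacked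
  set A := w.take m with hA
  set B := w.drop m with hB
  have hAB : A ++ B = w := List.take_append_drop m w
  have hAlen : A.length = m := by rw [hA, List.length_take]; omega
  have hBlen : B.length = n := by rw [hB, List.length_drop]; omega
  set su := A.toFinset with hsu
  set sv := B.toFinset with hsv
  set F := su.sort (· ≤ ·) with hF
  set G := sv.sort (· ≤ ·) with hG
  -- cardinalities
  have hsucard : su.card = k := by
    have h1 := card_toFinset_pack A
    rw [hpackA, huk, Nat.card_Icc, ← hsu] at h1
    omega
  have hsvcard : sv.card = l := by
    have h1 := card_toFinset_pack B
    rw [hpackB, hvl, Nat.card_Icc, ← hsv] at h1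
    omega
  -- decompositions
  have hAeq : A = u.map (letterF F) := eq_relabel_of_pack hpackA
  have hBeq : B = v.map (letterF G) := eq_relabel_of_pack hpackB
  -- alphabet union
  have hunion : su ∪ sv = Finset.Icc 1 p := by
    rw [hsu, hsv, ← List.toFinset_append, hAB, hwt]
  have hsusub : su ⊆ Finset.Icc 1 p := by rw [← hunion]; exact Finset.subset_union_left
  have hsvsub : sv ⊆ Finset.Icc 1 p := by rw [← hunion]; exact Finset.subset_union_right
  -- su membership characterization
  have hsumem : ∀ x, x ∈ su ↔ ∃ a ∈ Finset.Icc 1 k, letterF F a = x := by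
    intro x
    have : su = (u.map (letterF F)).toFinset := by rw [← hAeq]
    rw [this, List.toFinset_map', huk]
    simp [Finset.mem_image]
  set T := (Finset.Icc 1 k).filter (fun a => letterF F a ∉ sv) with hT
  set t := T.card with ht
  have hTsub : T ⊆ Finset.Icc 1 k := Finset.filter_subset _ _
  -- injectivity facts
  have hlastPinj : ∀ s' : Finset ℕ, s' ⊆ Finset.Icc 1 k →
      Set.InjOn (lastP u) s' := by
    intro s' hs' a ha b hb hab
    have ha' : a ∈ u := by
      rw [← List.mem_toFinset, huk]; exact hs' ha
    have hb' : b ∈ u := by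
      rw [← List.mem_toFinset, huk]; exact hs' hb
    calc a = letterAt u (lastP u a) := ((lastP_spec ha').2).symm
    _ = letterAt u (lastP u b) := by rw [hab]
    _ = b := (lastP_spec hb').2
  have hletterAt'inj : Set.InjOn (letterAt u') (lastPosSet u' : Set ℕ) := by
    intro a ha b hb hab
    calc a = lastP u' (letterAt u' a) := ((lastP_letterAt (by exact_mod_cast ha)).2).symm
    _ = lastP u' (letterAt u' b) := by rw [hab]
    _ = b := (lastP_letterAt (by exact_mod_cast hb)).2
  have hTimgsub : T.image (lastP u) ⊆ lastPosSet u' := by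
    rw [← hpu]
    intro j hj
    rw [Finset.mem_image] at hj
    obtain ⟨a, ha, rfl⟩ := hj
    have : a ∈ u := by rw [← List.mem_toFinset, huk]; exact hTsub ha
    exact (lastP_spec this).1
  set T' := (T.image (lastP u)).image (letterAt u') with hT'
  have hT'sub : T' ⊆ Finset.Icc 1 k := by
    rw [hT']
    intro a ha
    rw [Finset.mem_image] at ha
    obtain ⟨j, hj, rfl⟩ := ha
    have hj' : j ∈ lastPosSet u' := hTimgsub hj
    rw [← hu'k]
    exact List.mem_toFinset.2 (lastP_letterAt hj').1
  have hT'card : T'.card = t := by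
    rw [hT', Finset.card_image_of_injOn
      (Set.InjOn.mono (by exact_mod_cast hTimgsub) hletterAt'inj),
      Finset.card_image_of_injOn (hlastPinj T hTsub)]
  have hT'image : T'.image (lastP u') = T.image (lastP u) := by
    rw [hT', Finset.image_image]
    have : ∀ j ∈ T.image (lastP u), (lastP u' ∘ letterAt u') j = j := by
      intro j hj
      exact (lastP_letterAt (hTimgsub hj)).2
    rw [Finset.image_congr this, Finset.image_id']
  set CS' := T'.image (letterF F) with hCS'
  have hCS'subsu : CS' ⊆ su := by
    rw [hCS']
    intro x hx
    rw [Finset.mem_image] at hx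
    obtain ⟨a, ha, rfl⟩ := hx
    exact (hsumem _).2 ⟨a, hT'sub ha, rfl⟩
  have hCS'sub : CS' ⊆ Finset.Icc 1 p := hCS'subsu.trans hsusub
  have hCS'card : CS'.card = t := by
    rw [hCS', Finset.card_image_of_injOn, hT'card]
    intro a ha b hb hab
    exact letterF_injOn hsucard (hT'sub ha) (hT'sub hb) hab
  -- su \ sv = T.image f
  have hsudiff : su \ sv = T.image (letterF F) := by
    ext x
    rw [Finset.mem_sdiff, Finset.mem_image, hsumem]
    constructor
    · rintro ⟨⟨a, ha, rfl⟩, hnot⟩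
      exact ⟨a, Finset.mem_filter.2 ⟨ha, hnot⟩, rfl⟩
    · rintro ⟨a, ha, rfl⟩
      rw [Finset.mem_filter] at ha
      exact ⟨⟨a, ha.1, rfl⟩, ha.2⟩
  have hsudiffcard : (su \ sv).card = t := by
    rw [hsudiff, Finset.card_image_of_injOn]
    intro a ha b hb hab
    exact letterF_injOn hsucard (hTsub ha) (hTsub hb) hab
  have hp : p = l + t := by
    have h1 := Finset.card_sdiff_add_card su sv
    rw [hunion, hsudiffcard, hsvcard, Nat.card_Icc] at h1
    have hple : k ≤ m := by
      have := List.toFinset_card_le (l := A)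
      rw [hsu] at hsucard
      omega
    omega
  set sv' := Finset.Icc 1 p \ CS' with hsv'
  have hsv'card : sv'.card = l := by
    rw [hsv', Finset.card_sdiff_of_subset hCS'sub, hCS'card, Nat.card_Icc]
    omega
  set G' := sv'.sort (· ≤ ·) with hG'
  -- the image word
  have hphi : phi u u' v' w = u'.map (letterF F) ++ v'.map (letterF G') := by
    rw [phi]
  set w' := u'.map (letterF F) ++ v'.map (letterF G') with hw'
  -- prefix and suffix toFinsets
  have hpre : (u'.map (letterF F)).toFinset = su := toFinset_relabel hu'k hsucard
  have hsuf : (v'.map (letterF G')).toFinset = sv' := toFinset_relabel hv'l hsv'card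
  have hw't : w'.toFinset = Finset.Icc 1 p := by
    rw [hw', List.toFinset_append, hpre, hsuf]
    apply Finset.Subset.antisymm
    · exact Finset.union_subset hsusub (Finset.sdiff_subset.trans (le_refl _))
    · intro x hx
      rw [Finset.mem_union]
      by_cases hxc : x ∈ CS'
      · exact Or.inl (hCS'subsu hxc)
      · exact Or.inr (Finset.mem_sdiff.2 ⟨hx, hxc⟩)
  obtain ⟨hw'packed, hw'max⟩ := isPacked_of_toFinset hw't
  have hw'len : w'.length = m + n := by
    rw [hw', List.length_append, List.length_map, List.length_map, ← hlu, ← hlv]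
  have hple : p ≤ m + n := by
    rw [hpp]
    apply maxL_le
    intro a ha
    exact (hwletters a ha).2
  have hw'take : w'.take u'.length = u'.map (letterF F) := by
    rw [hw', List.take_left' (by rw [List.length_map])]
  have hw'drop : w'.drop u'.length = v'.map (letterF G') := by
    rw [hw', List.drop_left' (by rw [List.length_map])]
  have hw'conv : w' ∈ conv u' v' := by
    rw [mem_conv, hw'take, hw'drop]
    refine ⟨mem_allWords.2 ⟨by rw [hw'len, hlu, hlv], ?_⟩, hw'packed,
      pack_relabel hu'k hsucard, pack_relabel hv'l hsv'card⟩
    intro x hx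
    have : x ∈ Finset.Icc 1 p := by rw [← hw't]; exact List.mem_toFinset.2 hx
    rw [Finset.mem_Icc] at this
    rw [← hlu, ← hlv]
    omega
  -- T'' for w'
  have hT'' : (Finset.Icc 1 k).filter (fun a => letterF F a ∉ sv') = T' := by
    ext a
    rw [Finset.mem_filter]
    constructor
    · rintro ⟨ha, hnot⟩
      rw [hsv', Finset.mem_sdiff] at hnot
      push_neg at hnot
      have hfa : letterF F a ∈ Finset.Icc 1 p := hsusub ((hsumem _).2 ⟨a, ha, rfl⟩)
      have : letterF F a ∈ CS' := hnot hfa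
      rw [hCS', Finset.mem_image] at this
      obtain ⟨b, hb, hba⟩ := this
      rwa [← letterF_injOn hsucard (hT'sub hb) ha hba]
    · intro ha
      refine ⟨hT'sub ha, ?_⟩
      rw [hsv', Finset.mem_sdiff]
      push_neg
      intro
      rw [hCS']
      exact Finset.mem_image_of_mem _ ha
  -- WCdesc equality
  have hdesc : WCdesc w' = WCdesc w := by
    have hwform : w = u.map (letterF F) ++ v.map (letterF G) := by
      rw [← hAB, hAeq, hBeq]
    ext j
    rw [hwform, hw']
    rw [WCdesc_merge huk hvl hsucard hsvcard j,
        WCdesc_merge hu'k hv'l hsucard hsv'card j]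
    have e1 : ∀ (j : ℕ), (j ∈ lastPosSet u ∧ letterF F (letterAt u j) ∉ sv) ↔
        j ∈ T.image (lastP u) := fun j => by
      rw [disj1_iff huk (letterF F) sv j, ← hT]
    have e2 : ∀ (j : ℕ), (j ∈ lastPosSet u' ∧ letterF F (letterAt u' j) ∉ sv') ↔
        j ∈ T.image (lastP u) := fun j => by
      rw [disj1_iff hu'k (letterF F) sv' j, hT'', hT'image]
    rw [← hlu, ← hlv, ← hpv]
    apply or_congr
    · constructor
      · rintro ⟨h1, h2, h3⟩
        obtain ⟨ha, hb⟩ := (e1 j).2 ((e2 j).1 ⟨h1, h3⟩)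
        exact ⟨ha, h2, hb⟩
      · rintro ⟨h1, h2, h3⟩
        obtain ⟨ha, hb⟩ := (e2 j).2 ((e1 j).1 ⟨h1, h3⟩)
        exact ⟨ha, h2, hb⟩
    · exact Iff.rfl
  have hwcomp : WComp w' = WComp w := by
    rw [WComp, WComp, hdesc, hw'len, hwlen]
  -- phi of phi
  have hback : phi u' u v w' = w := by
    rw [phi]
    rw [hw'take, hw'drop, hpre, hsuf, hw'max, ← hk, ← hF]
    rw [hT'']
    have himg2 : (T'.image (lastP u')).image (letterAt u) = T := by
      rw [hT'image, Finset.image_image]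
      have : ∀ a ∈ T, (letterAt u ∘ lastP u) a = a := by
        intro a ha
        have : a ∈ u := by rw [← List.mem_toFinset, huk]; exact hTsub ha
        exact (lastP_spec this).2
      rw [Finset.image_congr this, Finset.image_id']
    rw [himg2]
    have hCS2 : T.image (letterF F) = su \ sv := hsudiff.symm
    rw [hCS2]
    have hsv2 : Finset.Icc 1 p \ (su \ sv) = sv := by
      apply Finset.Subset.antisymm
      · intro x hx
        rw [Finset.mem_sdiff] at hx
        obtain ⟨hx1, hx2⟩ := hx
        rw [← hunion, Finset.mem_union] at hx1
        rcases hx1 with hx1 | hx1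
        · by_contra hxs
          exact hx2 (Finset.mem_sdiff.2 ⟨hx1, hxs⟩)
        · exact hx1
      · intro x hx
        rw [Finset.mem_sdiff]
        refine ⟨hsvsub hx, ?_⟩
        rw [Finset.mem_sdiff]
        push_neg
        intro
        exact hx
    rw [hsv2, ← hG, ← hAeq, ← hBeq, hAB]
  rw [hphi]
  exact ⟨hw'conv, hwcomp, hback⟩

lemma WCdesc_subset (u : List ℕ) : WCdesc u ⊆ Finset.Icc 1 (u.length - 1) := by
  intro j hj
  rw [mem_WCdesc] at hj
  rw [Finset.mem_Icc]
  omega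

lemma WCdesc_eq_of_WComp {u u' : List ℕ} (hlu : u.length = u'.length)
    (h : WComp u = WComp u') : WCdesc u = WCdesc u' := by
  have h1 := descSetC_compOfDescSet (n := u.length) (WCdesc_subset u)
  have h2 := descSetC_compOfDescSet (n := u'.length) (WCdesc_subset u')
  rw [← h1, ← h2]
  rw [WComp] at h
  rw [WComp] at h
  rw [← hlu] at h2 ⊢
  rw [h, hlu]

lemma card_lastPosSet {u : List ℕ} (hu : IsPacked u) :
    (lastPosSet u).card = maxL u := by
  rw [← image_lastP, Finset.card_image_of_injOn, hu, Nat.card_Icc]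
  · omega
  · intro a ha b hb hab
    have ha' : a ∈ u := by exact_mod_cast List.mem_toFinset.1 (by exact_mod_cast ha)
    have hb' : b ∈ u := by exact_mod_cast List.mem_toFinset.1 (by exact_mod_cast hb)
    calc a = letterAt u (lastP u a) := ((lastP_spec ha').2).symm
    _ = letterAt u (lastP u b) := by rw [hab]
    _ = b := (lastP_spec hb').2


/-- The equivalence `u ∼ v ⟺ WC(u) = WC(v)` on packed words is compatible
with convolution: the multiset of W-compositions of `u ∗ v` depends only on
`WC(u)` and `WC(v)`. -/
theorem stmt14 (u u' v v' : List ℕ)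
    (hu : IsPacked u) (hu' : IsPacked u') (hv : IsPacked v) (hv' : IsPacked v')
    (hlu : u.length = u'.length) (hlv : v.length = v'.length)
    (h1 : WComp u = WComp u') (h2 : WComp v = WComp v') :
    (↑((conv u v).map WComp) : Multiset (List ℕ)) = ↑((conv u' v').map WComp) := by
  have hdu := WCdesc_eq_of_WComp hlu h1
  have hdv := WCdesc_eq_of_WComp hlv h2
  have hpu := lastPosSet_congr hlu hdu
  have hpv := lastPosSet_congr hlv hdv
  have hk : maxL u = maxL u' := by
    rw [← card_lastPosSet hu, ← card_lastPosSet hu', hpu]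
  have hl : maxL v = maxL v' := by
    rw [← card_lastPosSet hv, ← card_lastPosSet hv', hpv]
  have hmain := phi_main u u' v v' hu hu' hv hv' hlu hlv hk hl hpu hpv
  have hmain' := phi_main u' u v' v hu' hu hv' hv hlu.symm hlv.symm hk.symm hl.symm
    hpu.symm hpv.symm
  have hnod : (↑(conv u v) : Multiset (List ℕ)).Nodup := by
    exact_mod_cast (nodup_allWords (u.length + v.length)).filter _
  have hnod' : (↑(conv u' v') : Multiset (List ℕ)).Nodup := by
    exact_mod_cast (nodup_allWords (u'.length + v'.length)).filter _
  have key : (↑(conv u' v') : Multiset (List ℕ)) =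
      Multiset.map (phi u u' v') ↑(conv u v) := by
    have hnodmap : (Multiset.map (phi u u' v') ↑(conv u v)).Nodup := by
      apply Multiset.Nodup.map_on _ hnod
      intro x hx y hy hxy
      have hx' : x ∈ conv u v := by exact_mod_cast hx
      have hy' : y ∈ conv u v := by exact_mod_cast hy
      rw [← (hmain x hx').2.2, ← (hmain y hy').2.2, hxy]
    rw [Multiset.Nodup.ext hnod' hnodmap]
    intro a
    constructor
    · intro ha
      have ha' : a ∈ conv u' v' := by exact_mod_cast ha
      rw [Multiset.mem_map]
      refine ⟨phi u' u v a, by exact_mod_cast (hmain' a ha').1, (hmain' a ha').2.2⟩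
    · intro ha
      rw [Multiset.mem_map] at ha
      obtain ⟨x, hx, rfl⟩ := ha
      have hx' : x ∈ conv u v := by exact_mod_cast hx
      exact_mod_cast (hmain x hx').1
  calc (↑((conv u v).map WComp) : Multiset (List ℕ))
      = Multiset.map WComp ↑(conv u v) := by simp
  _ = Multiset.map WComp (Multiset.map (phi u u' v') ↑(conv u v)) := by
      rw [Multiset.map_map]
      apply Multiset.map_congr rfl
      intro x hx
      exact ((hmain x (by exact_mod_cast hx)).2.1).symm
  _ = Multiset.map WComp ↑(conv u' v') := by rw [key]
  _ = ↑((conv u' v').map WComp) := by simp
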